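/- Let a weighted directed graph on n vertices with m edges have strictly positive weights w and be strongly connected, with Laplacian L = B₀ * Matrix.diagonal w * Bᵀ. Then 0 is a root of multiplicity exactly 1 of the characteristic polynomial of L (over ℂ), and every nonzero complex eigenvalue μ of L satisfies Re μ > 0. -/

import Mathlib

open Matrix Polynomial

namespace LaplacianSpectrumAux

variable {n : ℕ}

/-- Diagonal entries of a matrix with zero row sums and nonpositive off-diagonal entries
are nonnegative. -/
lemma diag_nonneg {L : Matrix (Fin n) (Fin n) ℝ}
    (hrow : ∀ i, ∑ j, L i j = 0) (hoff : ∀ i j, i ≠ j → L i j ≤ 0) (i : Fin n) :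
    0 ≤ L i i := by
  have h1 : ∑ j ∈ Finset.univ.erase i, L i j ≤ 0 :=
    Finset.sum_nonpos fun j hj => hoff i j (Ne.symm (Finset.ne_of_mem_erase hj))
  have h2 : L i i + ∑ j ∈ Finset.univ.erase i, L i j = ∑ j, L i j :=
    Finset.add_sum_erase _ _ (Finset.mem_univ i)
  have := hrow i
  linarith

/-- Any real vector in the kernel of a "Laplacian-like" matrix of a strongly connected
digraph is constant. -/
lemma const_of_mulVec_zero {L : Matrix (Fin n) (Fin n) ℝ} (hn : 0 < n)
    (hrow : ∀ i, ∑ j, L i j = 0) (hoff : ∀ i j, i ≠ j → L i j ≤ 0)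
    {r : Fin n → Fin n → Prop}
    (hconn : ∀ i j, Relation.ReflTransGen r i j)
    (hedge : ∀ i j, r i j → L i j < 0)
    {y : Fin n → ℝ} (hy : L.mulVec y = 0) (i j : Fin n) : y i = y j := by
  have : Nonempty (Fin n) := ⟨⟨0, hn⟩⟩
  obtain ⟨i₀, hmax⟩ := Finite.exists_max y
  suffices hall : ∀ a, y a = y i₀ by rw [hall i, hall j]
  intro a
  have key : ∀ p q, y p = y i₀ → r p q → y q = y i₀ := by
    intro p q hp hpq
    have h0 : ∑ j, L p j * y j = 0 := by
      have := congrFun hy p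
      simpa [Matrix.mulVec, dotProduct] using this
    have h2 : ∑ j, L p j * y i₀ = 0 := by
      rw [← Finset.sum_mul, hrow p, zero_mul]
    have h1 : ∑ j, L p j * (y i₀ - y j) = 0 := by
      have : ∑ j, L p j * (y i₀ - y j) = ∑ j, (L p j * y i₀ - L p j * y j) := by
        apply Finset.sum_congr rfl; intros; ring
      rw [this, Finset.sum_sub_distrib, h0, h2, sub_zero]
    have hterm : ∀ j ∈ Finset.univ, L p j * (y i₀ - y j) ≤ 0 := by
      intro j _
      by_cases hji : j = p
      · subst hji
        rw [hp]
        simp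
      · exact mul_nonpos_iff.mpr
          (Or.inr ⟨hoff p j (Ne.symm hji), sub_nonneg.mpr (hmax j)⟩)
    have hzero := (Finset.sum_eq_zero_iff_of_nonpos hterm).mp h1 q (Finset.mem_univ q)
    have hLpq := hedge p q hpq
    rcases mul_eq_zero.mp hzero with h | h
    · exact absurd h (ne_of_lt hLpq)
    · linarith [sub_eq_zero.mp h]
  have hpath := hconn i₀ a
  induction hpath with
  | refl => rfl
  | tail hab hbc ih => exact key _ _ ih hbc

/-- A nonzero constant vector is not in the range of the Laplacian. -/
lemma const_range_zero {L : Matrix (Fin n) (Fin n) ℝ} (hn : 0 < n)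
    (hrow : ∀ i, ∑ j, L i j = 0) (hoff : ∀ i j, i ≠ j → L i j ≤ 0)
    {y : Fin n → ℝ} {c : ℝ} (hy : L.mulVec y = fun _ => c) : c = 0 := by
  have : Nonempty (Fin n) := ⟨⟨0, hn⟩⟩
  obtain ⟨i₁, hmax⟩ := Finite.exists_max y
  obtain ⟨i₂, hmin⟩ := Finite.exists_min y
  have hval : ∀ p, ∑ j, L p j * (y j - y p) = c := by
    intro p
    have h0 : ∑ j, L p j * y j = c := by
      have := congrFun hy p
      simpa [Matrix.mulVec, dotProduct] using this
    have h2 : ∑ j, L p j * y p = 0 := by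
      rw [← Finset.sum_mul, hrow p, zero_mul]
    have : ∑ j, L p j * (y j - y p) = ∑ j, (L p j * y j - L p j * y p) := by
      apply Finset.sum_congr rfl; intros; ring
    rw [this, Finset.sum_sub_distrib, h0, h2, sub_zero]
  have hge : 0 ≤ c := by
    rw [← hval i₁]
    apply Finset.sum_nonneg
    intro j _
    by_cases hj : j = i₁
    · subst hj; simp
    · exact mul_nonneg_iff.mpr (Or.inr ⟨hoff _ _ (Ne.symm hj), sub_nonpos.mpr (hmax j)⟩)
  have hle : c ≤ 0 := by
    rw [← hval i₂]
    apply Finset.sum_nonpos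
    intro j _
    by_cases hj : j = i₂
    · subst hj; simp
    · exact mul_nonpos_iff.mpr (Or.inr ⟨hoff _ _ (Ne.symm hj), sub_nonneg.mpr (hmin j)⟩)
  linarith

/-- Evaluation of the characteristic polynomial. -/
lemma eval_charpoly (M : Matrix (Fin n) (Fin n) ℂ) (μ : ℂ) :
    (Matrix.charpoly M).eval μ = (μ • (1 : Matrix (Fin n) (Fin n) ℂ) - M).det := by
  show (Polynomial.evalRingHom μ) (M.charmatrix.det) = _
  rw [RingHom.map_det]
  congr 1
  ext i j
  by_cases h : i = j
  · subst h
    simp [Matrix.charmatrix_apply_eq, Matrix.one_apply_eq]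
  · simp [Matrix.charmatrix_apply_ne _ _ _ h, Matrix.one_apply_ne h]

end LaplacianSpectrumAux

open LaplacianSpectrumAux

/-- For a strongly connected weighted digraph with positive weights, the
Laplacian `L` has `0` as a root of multiplicity exactly one of its characteristic
polynomial over `ℂ`, and every nonzero complex eigenvalue has positive real part. -/
theorem laplacian_zero_simple_root_and_spectrum_in_open_right_half_plane
    (n m : ℕ) (hn : 0 < n) (s t : Fin m → Fin n) (hst : ∀ k, s k ≠ t k)
    (w : Fin m → ℝ) (hw : ∀ k, 0 < w k)
    (hconn : ∀ i j : Fin n, Relation.ReflTransGen (fun a b => ∃ k, s k = a ∧ t k = b) i j)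
    (B B₀ : Matrix (Fin n) (Fin m) ℝ)
    (hB : ∀ i k, B i k = if i = s k then 1 else if i = t k then -1 else 0)
    (hB₀ : ∀ i k, B₀ i k = if i = s k then 1 else 0)
    (L : Matrix (Fin n) (Fin n) ℝ)
    (hL : L = B₀ * Matrix.diagonal w * Bᵀ) :
    Polynomial.rootMultiplicity (0 : ℂ) ((L.map (Complex.ofReal)).charpoly) = 1 ∧
    ∀ μ : ℂ, ((L.map (Complex.ofReal)).charpoly).IsRoot μ → μ ≠ 0 → 0 < μ.re := by
  -- entries of L
  have hent : ∀ i j, L i j = ∑ k, (if i = s k then (1:ℝ) else 0) * (w k * B j k) := by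
    intro i j
    rw [hL, Matrix.mul_apply]
    apply Finset.sum_congr rfl
    intro k _
    rw [Matrix.mul_diagonal, Matrix.transpose_apply, hB₀]
    ring
  -- columns of B sum to zero
  have hBsum : ∀ k, ∑ j, B j k = 0 := by
    intro k
    have hsplit : ∀ j, B j k = (if j = s k then (1:ℝ) else 0) + (if j = t k then (-1:ℝ) else 0) := by
      intro j
      rw [hB]
      have h3 : ¬ t k = s k := fun h => hst k h.symm
      by_cases h1 : j = s k
      · have h2 : j ≠ t k := by rw [h1]; exact hst k
        simp [h1, h2, hst k]
      · by_cases h2 : j = t k <;> simp [h1, h2, h3]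
    simp_rw [hsplit, Finset.sum_add_distrib]
    simp
  -- row sums of L are zero
  have hrow : ∀ i, ∑ j, L i j = 0 := by
    intro i
    have : ∑ j, L i j = ∑ j, ∑ k, (if i = s k then (1:ℝ) else 0) * (w k * B j k) := by
      apply Finset.sum_congr rfl; intro j _; exact hent i j
    rw [this, Finset.sum_comm]
    apply Finset.sum_eq_zero
    intro k _
    have : ∑ j, (if i = s k then (1:ℝ) else 0) * (w k * B j k)
        = ((if i = s k then (1:ℝ) else 0) * w k) * ∑ j, B j k := by
      rw [Finset.mul_sum]; apply Finset.sum_congr rfl; intros; ring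
    rw [this, hBsum k, mul_zero]
  -- off-diagonal terms
  have htermle : ∀ i j, i ≠ j → ∀ k, (if i = s k then (1:ℝ) else 0) * (w k * B j k) ≤ 0 := by
    intro i j hij k
    rw [hB]
    by_cases h1 : i = s k
    · have hjs : ¬ j = s k := fun h => hij (h1.trans h.symm)
      by_cases h2 : j = t k
      · simp only [if_pos h1, if_neg hjs, if_pos h2]
        nlinarith [hw k]
      · simp [if_pos h1, if_neg hjs, if_neg h2]
    · simp [if_neg h1]
  have hoff : ∀ i j, i ≠ j → L i j ≤ 0 := by
    intro i j hij
    rw [hent i j]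
    exact Finset.sum_nonpos fun k _ => htermle i j hij k
  have hedge : ∀ i j, (∃ k, s k = i ∧ t k = j) → L i j < 0 := by
    rintro i j ⟨k₀, hk1, hk2⟩
    have hij : i ≠ j := by rw [← hk1, ← hk2]; exact hst k₀
    rw [hent i j]
    have hlt : (if i = s k₀ then (1:ℝ) else 0) * (w k₀ * B j k₀) < 0 := by
      have h1 : i = s k₀ := hk1.symm
      have hjs : ¬ j = s k₀ := fun h => hij (h1.trans h.symm)
      have h2 : j = t k₀ := hk2.symm
      rw [hB]
      simp only [if_pos h1, if_neg hjs, if_pos h2]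
      nlinarith [hw k₀]
    have := Finset.sum_lt_sum (fun k (_ : k ∈ Finset.univ) => htermle i j hij k)
      ⟨k₀, Finset.mem_univ _, hlt⟩
    simpa using this
  -- move to ℂ
  set M : Matrix (Fin n) (Fin n) ℂ := L.map Complex.ofReal with hM
  have hmvre : ∀ (x : Fin n → ℂ) (p : Fin n),
      (M.mulVec x p).re = L.mulVec (fun j => (x j).re) p := by
    intro x p
    simp [hM, Matrix.mulVec, dotProduct, Matrix.map_apply, Complex.re_sum,
      Complex.mul_re]
  have hmvim : ∀ (x : Fin n → ℂ) (p : Fin n),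
      (M.mulVec x p).im = L.mulVec (fun j => (x j).im) p := by
    intro x p
    simp [hM, Matrix.mulVec, dotProduct, Matrix.map_apply, Complex.im_sum,
      Complex.mul_im]
  have hconst : ∀ x : Fin n → ℂ, M.mulVec x = 0 → ∀ i j, x i = x j := by
    intro x hx i j
    have hre : L.mulVec (fun j => (x j).re) = 0 := by
      funext p
      rw [← hmvre, hx]
      simp
    have him : L.mulVec (fun j => (x j).im) = 0 := by
      funext p
      rw [← hmvim, hx]
      simp
    exact Complex.ext
      (const_of_mulVec_zero hn hrow hoff hconn hedge hre i j)
      (const_of_mulVec_zero hn hrow hoff hconn hedge him i j)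
  have hconstrange : ∀ (x : Fin n → ℂ) (c : ℂ), M.mulVec x = (fun _ => c) → c = 0 := by
    intro x c hx
    have hre : L.mulVec (fun j => (x j).re) = fun _ => c.re := by
      funext p
      rw [← hmvre, hx]
    have him : L.mulVec (fun j => (x j).im) = fun _ => c.im := by
      funext p
      rw [← hmvim, hx]
    exact Complex.ext (const_range_zero hn hrow hoff hre) (const_range_zero hn hrow hoff him)
  set T := Matrix.toLin' M with hT
  set i₀ : Fin n := ⟨0, hn⟩ with hi₀
  -- the constant vector of ones is in the kernel
  have hones : M.mulVec (fun _ => (1:ℂ)) = 0 := by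
    funext p
    have : M.mulVec (fun _ => (1:ℂ)) p = ∑ j, ((L p j : ℂ)) := by
      simp [hM, Matrix.mulVec, dotProduct, Matrix.map_apply]
    rw [this, ← Complex.ofReal_sum, hrow p]
    simp
  have hkerspan : LinearMap.ker T = Submodule.span ℂ {fun _ => (1:ℂ)} := by
    apply le_antisymm
    · intro x hx
      rw [LinearMap.mem_ker, hT, Matrix.toLin'_apply] at hx
      have hc := hconst x hx
      have hx' : x = x i₀ • (fun _ => (1:ℂ)) := by
        funext j
        simp [hc j i₀]
      rw [hx']
      exact Submodule.smul_mem _ _ (Submodule.mem_span_singleton_self _)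
    · rw [Submodule.span_le, Set.singleton_subset_iff, SetLike.mem_coe, LinearMap.mem_ker,
        hT, Matrix.toLin'_apply]
      exact hones
  -- kernel of T^2 equals kernel of T
  have hkey : ∀ x : Fin n → ℂ, T (T x) = 0 → T x = 0 := by
    intro x hx
    have h1 : M.mulVec (M.mulVec x) = 0 := by
      simpa [hT, Matrix.toLin'_apply] using hx
    have hc := hconst _ h1
    have h2 : M.mulVec x = fun _ => (M.mulVec x) i₀ := funext fun j => hc j i₀
    have h3 := hconstrange _ _ h2
    rw [hT, Matrix.toLin'_apply, h2]
    funext j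
    simp [h3]
  have hpow : ∀ (k : ℕ) (x : Fin n → ℂ), (T ^ k) x = 0 → T x = 0 := by
    intro k
    induction k with
    | zero =>
      intro x hx
      simp only [pow_zero, Module.End.one_apply] at hx
      rw [hx]
      exact map_zero T
    | succ k ih =>
      intro x hx
      rw [pow_succ, Module.End.mul_apply] at hx
      exact hkey x (ih (T x) hx)
  have hmaxgen : Module.End.maxGenEigenspace T 0 = LinearMap.ker T := by
    apply le_antisymm
    · intro x hx
      rw [Module.End.mem_maxGenEigenspace] at hx
      obtain ⟨k, hk⟩ := hx
      rw [zero_smul, sub_zero] at hk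
      exact LinearMap.mem_ker.mpr (hpow k x hk)
    · intro x hx
      rw [Module.End.mem_maxGenEigenspace]
      exact ⟨1, by rw [zero_smul, sub_zero, pow_one]; exact hx⟩
  have hcp : LinearMap.charpoly T = M.charpoly := by
    rw [hT, ← LinearMap.charpoly_toMatrix (Matrix.toLin' M) (Pi.basisFun ℂ (Fin n)),
      LinearMap.toMatrix_eq_toMatrix', LinearMap.toMatrix'_toLin']
  have hone_ne : (fun _ => (1:ℂ)) ≠ (0 : Fin n → ℂ) := by
    intro h
    have := congrFun h i₀
    simp at this
  constructor
  · -- multiplicity of the root 0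
    rw [Polynomial.rootMultiplicity_eq_natTrailingDegree', ← hcp,
      ← LinearMap.finrank_maxGenEigenspace_zero_eq, hmaxgen, hkerspan]
    exact finrank_span_singleton hone_ne
  · -- nonzero eigenvalues have positive real part
    intro μ hroot hμ
    have hdet : (μ • (1 : Matrix (Fin n) (Fin n) ℂ) - M).det = 0 := by
      rw [← LaplacianSpectrumAux.eval_charpoly]
      exact hroot
    obtain ⟨v, hv0, hv⟩ := (Matrix.exists_mulVec_eq_zero_iff).mpr hdet
    have hMv : M.mulVec v = μ • v := by
      rw [Matrix.sub_mulVec, Matrix.smul_mulVec, Matrix.one_mulVec, sub_eq_zero] at hv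
      exact hv.symm
    have heig : Module.End.HasEigenvalue (Matrix.toLin' M) μ :=
      Module.End.hasEigenvalue_of_hasEigenvector
        ⟨Module.End.mem_eigenspace_iff.mpr (by rw [Matrix.toLin'_apply, hMv]), hv0⟩
    obtain ⟨i, hball⟩ := eigenvalue_mem_ball heig
    have hnorm : ∀ j, i ≠ j → ‖M i j‖ = -(L i j) := by
      intro j hij
      rw [hM, Matrix.map_apply, Complex.norm_real, Real.norm_eq_abs, abs_of_nonpos (hoff i j hij)]
    have hrad : ∑ j ∈ Finset.univ.erase i, ‖M i j‖ = L i i := by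
      have h1 : ∑ j ∈ Finset.univ.erase i, ‖M i j‖ = ∑ j ∈ Finset.univ.erase i, -(L i j) :=
        Finset.sum_congr rfl fun j hj => hnorm j (Ne.symm (Finset.ne_of_mem_erase hj))
      have h2 : L i i + ∑ j ∈ Finset.univ.erase i, L i j = 0 := by
        rw [Finset.add_sum_erase _ _ (Finset.mem_univ i)]
        exact hrow i
      rw [h1, Finset.sum_neg_distrib]
      linarith
    have hball' : ‖μ - (L i i : ℂ)‖ ≤ L i i := by
      rw [Metric.mem_closedBall, Complex.dist_eq, hrad] at hball
      have hMii : M i i = (L i i : ℂ) := by rw [hM, Matrix.map_apply]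
      rwa [hMii] at hball
    have hd : (0:ℝ) ≤ L i i := diag_nonneg hrow hoff i
    have hsq : Complex.normSq (μ - (L i i : ℂ)) ≤ (L i i)^2 := by
      rw [← Complex.sq_norm]
      exact pow_le_pow_left₀ (norm_nonneg _) hball' 2
    have hexp : (μ.re - L i i)^2 + μ.im^2 ≤ (L i i)^2 := by
      have : Complex.normSq (μ - (L i i : ℂ)) = (μ.re - L i i)^2 + μ.im^2 := by
        simp [Complex.normSq_apply, Complex.sub_re, Complex.sub_im, Complex.ofReal_re,
          Complex.ofReal_im, sq]
      rwa [this] at hsq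
    have hpos : 0 < μ.re^2 + μ.im^2 := by
      have := Complex.normSq_pos.mpr hμ
      have h : Complex.normSq μ = μ.re^2 + μ.im^2 := by
        simp [Complex.normSq_apply, sq]
      linarith [h ▸ this]
    nlinarith [hexp, hpos, hd, sq_nonneg μ.re, sq_nonneg μ.im]
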